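/- arXiv:2203.05234 — 3 statements merged into one kernel-verified Lean document; each statement's English description precedes it below -/
import Mathlib

section
/- For H in (0,1), T > 0 and μ > 0, define Δ(μ) as in the pathwise LSE compensation. Then dΔ/dμ is strictly positive for all μ > 0 if H < 1/2, identically zero if H = 1/2, and strictly negative for all μ > 0 if H > 1/2. -/
open Real MeasureTheory intervalIntegral

/-- Lower incomplete gamma function `γ(h, x) = ∫₀ˣ e^{-s} s^{h-1} ds`. -/
noncomputable def lowerGamma (h x : ℝ) : ℝ := ∫ s in (0:ℝ)..x, Real.exp (-s) * s ^ (h - 1)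

/-- The compensation term `Δ(μ)` for Hurst parameter `H` and time horizon `T`. -/
noncomputable def Delta (H T μ : ℝ) : ℝ :=
  (1/2) * T ^ (2*H) * (1 - lowerGamma 1 (μ*T))
    - μ ^ (-(2*H)) * lowerGamma (2*H+1) (μ*T) * (H - 1/2)
    + T * H * μ ^ (1-2*H) * lowerGamma (2*H) (μ*T)

lemma lg_intInt (h x : ℝ) (hh : 0 < h) :
    IntervalIntegrable (fun s => Real.exp (-s) * s ^ (h - 1)) volume 0 x := by
  exact (intervalIntegrable_rpow' (by linarith)).continuousOn_mul
    (Real.continuous_exp.comp continuous_neg).continuousOn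

lemma lg_hasDerivAt (h x : ℝ) (hh : 0 < h) (hx : 0 < x) :
    HasDerivAt (lowerGamma h) (Real.exp (-x) * x ^ (h - 1)) x := by
  have hmeas : StronglyMeasurableAtFilter (fun s => Real.exp (-s) * s ^ (h - 1))
      (nhds x) volume := by
    have : Measurable (fun s : ℝ => Real.exp (-s) * s ^ (h - 1)) :=
      (Real.measurable_exp.comp measurable_neg).mul (measurable_id.pow_const _)
    exact this.stronglyMeasurable.stronglyMeasurableAtFilter
  have hcont : ContinuousAt (fun s => Real.exp (-s) * s ^ (h - 1)) x :=
    ((Real.continuous_exp.comp continuous_neg).continuousAt).mul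
      (Real.continuousAt_rpow_const x (h - 1) (Or.inl hx.ne'))
  exact intervalIntegral.integral_hasDerivAt_right (lg_intInt h x hh) hmeas hcont

lemma lgT_hasDerivAt (h T μ : ℝ) (hh : 0 < h) (hT : 0 < T) (hμ : 0 < μ) :
    HasDerivAt (fun μ => lowerGamma h (μ*T))
      (Real.exp (-(μ*T)) * (μ*T) ^ (h - 1) * T) μ :=
  by have := (lg_hasDerivAt h (μ*T) hh (by positivity)).comp μ (hasDerivAt_mul_const T); exact this

lemma delta_hasDerivAt (H T μ : ℝ) (hH : 0 < H) (hT : 0 < T) (hμ : 0 < μ) :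
    HasDerivAt (Delta H T)
      (H * (1 - 2*H) * μ ^ (-(2*H) - 1) *
        (μ * T * lowerGamma (2*H) (μ*T) - lowerGamma (2*H+1) (μ*T))) μ := by
  have d1 : HasDerivAt (fun μ => (1/2) * T ^ (2*H) * (1 - lowerGamma 1 (μ*T)))
      ((1/2) * T ^ (2*H) * (0 - Real.exp (-(μ*T)) * (μ*T) ^ ((1:ℝ) - 1) * T)) μ :=
    (((hasDerivAt_const μ (1:ℝ)).sub (lgT_hasDerivAt 1 T μ one_pos hT hμ))).const_mul _
  have d2 : HasDerivAt (fun μ => μ ^ (-(2*H)) * lowerGamma (2*H+1) (μ*T) * (H - 1/2))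
      ((((-(2*H)) * μ ^ (-(2*H) - 1)) * lowerGamma (2*H+1) (μ*T)
        + μ ^ (-(2*H)) * (Real.exp (-(μ*T)) * (μ*T) ^ (2*H+1 - 1) * T)) * (H - 1/2)) μ :=
    (((Real.hasDerivAt_rpow_const (p := -(2*H)) (Or.inl hμ.ne')).mul
      (lgT_hasDerivAt (2*H+1) T μ (by linarith) hT hμ))).mul_const _
  have d3 : HasDerivAt (fun μ => T * H * (μ ^ (1-2*H) * lowerGamma (2*H) (μ*T)))
      (T * H * (((1-2*H) * μ ^ (1-2*H - 1)) * lowerGamma (2*H) (μ*T)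
        + μ ^ (1-2*H) * (Real.exp (-(μ*T)) * (μ*T) ^ (2*H - 1) * T))) μ :=
    ((Real.hasDerivAt_rpow_const (p := 1-2*H) (Or.inl hμ.ne')).mul
      (lgT_hasDerivAt (2*H) T μ (by linarith) hT hμ)).const_mul (T * H)
  have hD := (d1.sub d2).add d3
  have hfun : (fun μ => (1/2) * T ^ (2*H) * (1 - lowerGamma 1 (μ*T))
      - μ ^ (-(2*H)) * lowerGamma (2*H+1) (μ*T) * (H - 1/2)
      + T * H * (μ ^ (1-2*H) * lowerGamma (2*H) (μ*T))) = Delta H T := by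
    ext ν; simp only [Delta]; ring
  simp only [Pi.add_def, Pi.sub_def] at hD
  rw [hfun] at hD
  refine hD.congr_deriv ?_
  -- algebraic identity
  have hμT : (0:ℝ) < μ * T := by positivity
  have e0 : (μ*T) ^ ((1:ℝ) - 1) = 1 := by norm_num
  have eA : μ ^ (-(2*H) - 1) = (μ ^ (2*H) * μ)⁻¹ := by
    rw [show -(2*H) - 1 = -(2*H + 1) by ring, Real.rpow_neg hμ.le,
      Real.rpow_add hμ, Real.rpow_one]
  have eB : μ ^ (-(2*H)) = (μ ^ (2*H))⁻¹ := by rw [Real.rpow_neg hμ.le]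
  have eC : μ ^ (1 - 2*H - 1) = (μ ^ (2*H))⁻¹ := by
    rw [show 1 - 2*H - 1 = -(2*H) by ring, Real.rpow_neg hμ.le]
  have eD : μ ^ (1 - 2*H) = μ * (μ ^ (2*H))⁻¹ := by
    rw [show 1 - 2*H = 1 + -(2*H) by ring, Real.rpow_add hμ, Real.rpow_one,
      Real.rpow_neg hμ.le]
  have eE : (μ*T) ^ (2*H + 1 - 1) = μ ^ (2*H) * T ^ (2*H) := by
    rw [show 2*H + 1 - 1 = 2*H by ring, Real.mul_rpow hμ.le hT.le]
  have eF : (μ*T) ^ (2*H - 1) = μ ^ (2*H) * T ^ (2*H) * (μ*T)⁻¹ := by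
    rw [show 2*H - 1 = 2*H + -1 by ring, Real.rpow_add hμT, Real.rpow_neg_one,
      Real.mul_rpow hμ.le hT.le]
  rw [e0, eA, eB, eC, eD, eE, eF]
  have hA : μ ^ (2*H) ≠ 0 := (Real.rpow_pos_of_pos hμ _).ne'
  field_simp
  ring

lemma key_pos (H : ℝ) (hH : 0 < H) (x : ℝ) (hx : 0 < x) :
    0 < x * lowerGamma (2*H) x - lowerGamma (2*H+1) x := by
  have h1 : IntervalIntegrable (fun s => Real.exp (-s) * s ^ (2*H - 1)) volume 0 x :=
    lg_intInt _ _ (by linarith)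
  have h2 : IntervalIntegrable (fun s => Real.exp (-s) * s ^ (2*H+1 - 1)) volume 0 x :=
    lg_intInt _ _ (by linarith)
  have heq : x * lowerGamma (2*H) x - lowerGamma (2*H+1) x
      = ∫ s in (0:ℝ)..x,
        (x * (Real.exp (-s) * s ^ (2*H-1)) - Real.exp (-s) * s ^ (2*H+1-1)) := by
    rw [intervalIntegral.integral_sub (h1.const_mul x) h2,
      intervalIntegral.integral_const_mul]
    rfl
  rw [heq]
  apply intervalIntegral.intervalIntegral_pos_of_pos_on ((h1.const_mul x).sub h2) _ hx
  intro s hs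
  have hs0 : 0 < s := hs.1
  have hsx : s < x := hs.2
  have hpow : s ^ (2*H+1-1) = s ^ (2*H-1) * s := by
    rw [show 2*H+1-1 = (2*H-1) + 1 by ring, Real.rpow_add hs0, Real.rpow_one]
  rw [hpow]
  have h3 : 0 < Real.exp (-s) * s ^ (2*H-1) := by positivity
  nlinarith

theorem stmt_2 (H T : ℝ) (hH : H ∈ Set.Ioo (0:ℝ) 1) (hT : 0 < T) :
    (H < 1/2 → ∀ μ > (0:ℝ), 0 < deriv (Delta H T) μ)
    ∧ (H = 1/2 → ∀ μ > (0:ℝ), deriv (Delta H T) μ = 0)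
    ∧ (1/2 < H → ∀ μ > (0:ℝ), deriv (Delta H T) μ < 0) := by
  obtain ⟨hH0, hH1⟩ := hH
  have hderiv : ∀ μ > (0:ℝ), deriv (Delta H T) μ
      = H * (1 - 2*H) * μ ^ (-(2*H) - 1) *
        (μ * T * lowerGamma (2*H) (μ*T) - lowerGamma (2*H+1) (μ*T)) :=
    fun μ hμ => (delta_hasDerivAt H T μ hH0 hT hμ).deriv
  refine ⟨fun hlt μ hμ => ?_, fun heq μ hμ => ?_, fun hgt μ hμ => ?_⟩
  · rw [hderiv μ hμ]
    have := key_pos H hH0 (μ*T) (by positivity)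
    have hp : (0:ℝ) < μ ^ (-(2*H) - 1) := Real.rpow_pos_of_pos hμ _
    have : 0 < H * (1 - 2*H) := by nlinarith
    positivity
  · rw [hderiv μ hμ, heq]; ring
  · rw [hderiv μ hμ]
    have hk := key_pos H hH0 (μ*T) (by positivity)
    have hp : (0:ℝ) < μ ^ (-(2*H) - 1) := Real.rpow_pos_of_pos hμ _
    have hneg : H * (1 - 2*H) < 0 := by nlinarith
    exact mul_neg_of_neg_of_pos (mul_neg_of_neg_of_pos hneg hp) hk
end

section
/- For H in (0,1), T > 0 and μ > 0, the integral ∫₀^{μT} e^{-s} s^{2H-1} (2H μT - (2H+1)s) ds is strictly positive. -/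
open Real MeasureTheory intervalIntegral

lemma aux_pos (a α : ℝ) (ha : 0 < a) (hα : 0 < α) :
    0 < ∫ s in (0:ℝ)..a, Real.exp (-s) * s ^ (α - 1) * (α * a - (α + 1) * s) := by
  have hα1 : (0:ℝ) < α + 1 := by linarith
  set s₀ := α * a / (α + 1) with hs₀_def
  have hs₀_pos : 0 < s₀ := by positivity
  have hs₀_lt : s₀ < a := by
    rw [hs₀_def, div_lt_iff₀ hα1]; nlinarith
  set f : ℝ → ℝ := fun s => s ^ (α - 1) * (α * a - (α + 1) * s) with hf_def
  -- integrability
  have hint_rpow : ∀ b c : ℝ, IntervalIntegrable (fun s : ℝ => s ^ (α - 1)) volume b c := by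
    intro b c
    exact intervalIntegral.intervalIntegrable_rpow' (by linarith)
  have hint_f : ∀ b c : ℝ, IntervalIntegrable f volume b c := by
    intro b c
    exact (hint_rpow b c).mul_continuousOn (by fun_prop)
  have hint_ef : ∀ b c : ℝ, IntervalIntegrable (fun s => Real.exp (-s) * f s) volume b c := by
    intro b c
    exact (hint_f b c).continuousOn_mul (by fun_prop)
  have hint_cf : ∀ b c : ℝ, IntervalIntegrable (fun s => Real.exp (-s₀) * f s) volume b c := by
    intro b c
    exact (hint_f b c).continuousOn_mul (by fun_prop)
  have hint_g : ∀ b c : ℝ, IntervalIntegrable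
      (fun s => (Real.exp (-s) - Real.exp (-s₀)) * f s) volume b c := by
    intro b c
    exact (hint_f b c).continuousOn_mul (by fun_prop)
  -- key zero integral
  have hIf : (∫ s in (0:ℝ)..a, f s) = 0 := by
    have hcong : ∀ s ∈ Set.uIcc (0:ℝ) a, f s = α * a * s ^ (α - 1) - (α + 1) * s ^ α := by
      intro s hs
      rw [Set.uIcc_of_le ha.le] at hs
      have hs0 : 0 ≤ s := hs.1
      have hsα : s ^ α = s ^ (α - 1) * s := by
        have h := Real.rpow_add' hs0 (by simp [hα.ne'] : (α - 1) + 1 ≠ 0)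
        rw [Real.rpow_one] at h
        rw [show α - 1 + 1 = α by ring] at h
        exact h
      simp only [hf_def]
      rw [hsα]; ring
    rw [intervalIntegral.integral_congr hcong,
      intervalIntegral.integral_sub ((hint_rpow 0 a).const_mul _)
        ((intervalIntegral.intervalIntegrable_rpow' (by linarith)).const_mul _),
      intervalIntegral.integral_const_mul, intervalIntegral.integral_const_mul,
      integral_rpow (Or.inl (by linarith)), integral_rpow (Or.inl (by linarith))]
    rw [show α - 1 + 1 = α by ring]
    rw [Real.zero_rpow hα.ne', Real.zero_rpow (by linarith : α + 1 ≠ 0)]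
    have : a ^ (α + 1) = a ^ α * a := by
      have h := Real.rpow_add ha α 1
      rwa [Real.rpow_one] at h
    rw [this]
    field_simp
    ring
  -- positivity of the two pieces
  have hfs_pos : ∀ s, 0 < s → s < s₀ → 0 < f s := by
    intro s h1 h2
    apply mul_pos (Real.rpow_pos_of_pos h1 _)
    have : (α + 1) * s < (α + 1) * s₀ := by nlinarith
    have hs₀eq : (α + 1) * s₀ = α * a := by
      rw [hs₀_def]; field_simp
    linarith [hs₀eq ▸ this]
  have hfs_neg : ∀ s, s₀ < s → f s < 0 := by
    intro s h2
    have h1 : 0 < s := lt_trans hs₀_pos h2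
    apply mul_neg_of_pos_of_neg (Real.rpow_pos_of_pos h1 _)
    have : (α + 1) * s₀ < (α + 1) * s := by nlinarith
    have hs₀eq : (α + 1) * s₀ = α * a := by
      rw [hs₀_def]; field_simp
    linarith [hs₀eq ▸ this]
  have hpos1 : 0 < ∫ s in (0:ℝ)..s₀, (Real.exp (-s) - Real.exp (-s₀)) * f s := by
    apply intervalIntegral_pos_of_pos_on (hint_g 0 s₀) _ hs₀_pos
    intro s hs
    apply mul_pos _ (hfs_pos s hs.1 hs.2)
    have : Real.exp (-s₀) < Real.exp (-s) := Real.exp_lt_exp.mpr (by linarith [hs.2])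
    linarith
  have hpos2 : 0 < ∫ s in s₀..a, (Real.exp (-s) - Real.exp (-s₀)) * f s := by
    apply intervalIntegral_pos_of_pos_on (hint_g s₀ a) _ hs₀_lt
    intro s hs
    apply mul_pos_of_neg_of_neg _ (hfs_neg s hs.1)
    have : Real.exp (-s) < Real.exp (-s₀) := Real.exp_lt_exp.mpr (by linarith [hs.1])
    linarith
  have hsplit : (∫ s in (0:ℝ)..s₀, (Real.exp (-s) - Real.exp (-s₀)) * f s)
      + (∫ s in s₀..a, (Real.exp (-s) - Real.exp (-s₀)) * f s)
      = ∫ s in (0:ℝ)..a, (Real.exp (-s) - Real.exp (-s₀)) * f s :=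
    intervalIntegral.integral_add_adjacent_intervals (hint_g 0 s₀) (hint_g s₀ a)
  have hGpos : 0 < ∫ s in (0:ℝ)..a, (Real.exp (-s) - Real.exp (-s₀)) * f s := by
    rw [← hsplit]; linarith
  have hdecomp : (∫ s in (0:ℝ)..a, (Real.exp (-s) - Real.exp (-s₀)) * f s)
      = (∫ s in (0:ℝ)..a, Real.exp (-s) * f s)
        - Real.exp (-s₀) * ∫ s in (0:ℝ)..a, f s := by
    rw [← intervalIntegral.integral_const_mul,
      ← intervalIntegral.integral_sub (hint_ef 0 a) (hint_cf 0 a)]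
    congr 1
    funext s
    ring
  rw [hdecomp, hIf, mul_zero, sub_zero] at hGpos
  have : (∫ s in (0:ℝ)..a, Real.exp (-s) * s ^ (α - 1) * (α * a - (α + 1) * s))
      = ∫ s in (0:ℝ)..a, Real.exp (-s) * f s := by
    congr 1
    funext s
    simp only [hf_def]
    ring
  rw [this]
  exact hGpos

theorem stmt_3 (H T μ : ℝ) (hH : H ∈ Set.Ioo (0:ℝ) 1) (hT : 0 < T) (hμ : 0 < μ) :
    0 < ∫ s in (0:ℝ)..(μ*T), Real.exp (-s) * s ^ (2*H - 1) * (2*H*μ*T - (2*H+1)*s) := by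
  have key := aux_pos (μ * T) (2 * H) (mul_pos hμ hT) (by linarith [hH.1])
  have heq : (fun s => Real.exp (-s) * s ^ (2*H - 1) * (2*H*μ*T - (2*H+1)*s))
      = fun s => Real.exp (-s) * s ^ (2*H - 1) * (2*H*(μ*T) - (2*H+1)*s) := by
    funext s; ring
  calc (0:ℝ) < _ := key
  _ = _ := by rw [heq]
end

section
/- Let H ∈ (0,1), H ≠ 1/2, let c ∈ [0,∞), λ > 0, and let α_k > 0, β_k ≥ 0 with β_k/α_k → c and Σ_{k=1}^∞ α_k^{2-2H} = ∞. Then for any Λ_L > 0, the ratio (Σ_{k=1}^N α_k²/(α_k Λ_L + β_k)^{2H}) / (Σ_{k=1}^N α_k²/(α_k λ + β_k)^{2H}) converges, as N → ∞, to ((λ + c)/(Λ_L + c))^{2H}. -/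
open Filter Finset

private lemma weighted_cesaro {a b : ℕ → ℝ} {L : ℝ} (ha : ∀ k, 0 ≤ a k)
    (hdiv : Tendsto (fun n => ∑ i ∈ range n, a i) atTop atTop)
    (hb : Tendsto b atTop (nhds L)) :
    Tendsto (fun n => (∑ i ∈ range n, a i * b i) / ∑ i ∈ range n, a i) atTop (nhds L) := by
  have hf : (fun i => a i * (b i - L)) =o[atTop] a := by
    rw [Asymptotics.isLittleO_iff]
    intro ε hε
    have : Tendsto (fun i => b i - L) atTop (nhds 0) := by
      simpa using hb.sub_const L
    filter_upwards [(Metric.tendsto_nhds.1 this ε hε)] with i hi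
    rw [Real.dist_eq, sub_zero] at hi
    rw [Real.norm_eq_abs, Real.norm_eq_abs, abs_mul, abs_of_nonneg (ha i)]
    exact mul_le_mul_of_nonneg_left hi.le (ha i) |>.trans (by rw [mul_comm])
  have hsum := hf.sum_range ha hdiv
  have h0 : Tendsto (fun n => (∑ i ∈ range n, a i * (b i - L)) / ∑ i ∈ range n, a i)
      atTop (nhds 0) := hsum.tendsto_div_nhds_zero
  have hne : ∀ᶠ n in atTop, (∑ i ∈ range n, a i) ≠ 0 := by
    filter_upwards [hdiv.eventually_gt_atTop 0] with n hn using hn.ne'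
  have h1 := h0.add_const L
  rw [zero_add] at h1
  refine h1.congr' ?_
  filter_upwards [hne] with n hn
  have : ∑ i ∈ range n, a i * (b i - L)
      = (∑ i ∈ range n, a i * b i) - L * ∑ i ∈ range n, a i := by
    rw [mul_sum, ← sum_sub_distrib]; congr 1; ext i; ring
  rw [this]
  field_simp
  ring

private lemma aux_ratio (H : ℝ) (hH : H ∈ Set.Ioo (0:ℝ) 1)
    (c : ℝ) (α β : ℕ → ℝ) (hα : ∀ k, 0 < α k) (hβ : ∀ k, 0 ≤ β k)
    (hratio : Tendsto (fun k => β k / α k) atTop (nhds c))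
    (hdiv : Tendsto (fun N => ∑ k ∈ Finset.Icc 1 N, (α k) ^ (2 - 2*H)) atTop atTop)
    (hc : 0 ≤ c) {Λ : ℝ} (hΛ : 0 < Λ) :
    Tendsto (fun N =>
        (∑ k ∈ Finset.Icc 1 N, (α k) ^ 2 / (α k * Λ + β k) ^ (2*H)) /
        (∑ k ∈ Finset.Icc 1 N, (α k) ^ (2 - 2*H)))
      atTop (nhds ((Λ + c) ^ (-(2*H)))) := by
  set a : ℕ → ℝ := fun i => (α (1 + i)) ^ (2 - 2*H) with ha_def
  set b : ℕ → ℝ := fun i => (Λ + β (1 + i) / α (1 + i)) ^ (-(2*H)) with hb_def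
  have hIcc : ∀ (f : ℕ → ℝ) (N : ℕ), ∑ k ∈ Finset.Icc 1 N, f k = ∑ i ∈ range N, f (1 + i) := by
    intro f N
    have : Finset.Icc 1 N = Finset.Ico 1 (N+1) := by
      ext x; simp [Nat.lt_succ_iff]
    rw [this, Finset.sum_Ico_eq_sum_range]
    simp
  have ha : ∀ i, 0 ≤ a i := fun i => Real.rpow_nonneg (hα _).le _
  have hdiv' : Tendsto (fun n => ∑ i ∈ range n, a i) atTop atTop := by
    refine hdiv.congr fun N => ?_
    exact hIcc _ N
  have hb : Tendsto b atTop (nhds ((Λ + c) ^ (-(2*H)))) := by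
    have h1 : Tendsto (fun i => Λ + β (1 + i) / α (1 + i)) atTop (nhds (Λ + c)) := by
      refine tendsto_const_nhds.add ?_
      exact hratio.comp (tendsto_atTop_atTop_of_monotone (fun x y h => by omega)
        (fun n => ⟨n, by omega⟩))
    exact h1.rpow_const (Or.inl (show (0:ℝ) < Λ + c by linarith).ne')
  have key : ∀ k, (α k) ^ 2 / (α k * Λ + β k) ^ (2*H)
      = (α k) ^ (2 - 2*H) * (Λ + β k / α k) ^ (-(2*H)) := by
    intro k
    have hαk := hα k
    have hd : 0 ≤ β k / α k := div_nonneg (hβ k) (hα k).le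
    have hx : 0 < Λ + β k / α k := by linarith
    have heq : α k * Λ + β k = α k * (Λ + β k / α k) := by
      field_simp
    rw [heq, Real.mul_rpow hαk.le hx.le, Real.rpow_sub hαk, Real.rpow_neg hx.le,
      ← Real.rpow_natCast (α k) 2]
    push_cast
    field_simp
  have := weighted_cesaro ha hdiv' hb
  refine this.congr fun N => ?_
  rw [hIcc (fun k => (α k) ^ 2 / (α k * Λ + β k) ^ (2*H)) N,
    hIcc (fun k => (α k) ^ (2 - 2*H)) N]
  congr 1
  exact Finset.sum_congr rfl fun i _ => (key (1 + i)).symm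

theorem stmt_17 (H : ℝ) (hH : H ∈ Set.Ioo (0:ℝ) 1) (hne : H ≠ 1/2)
    (c lam : ℝ) (hc : 0 ≤ c) (hlam : 0 < lam)
    (α β : ℕ → ℝ) (hα : ∀ k, 0 < α k) (hβ : ∀ k, 0 ≤ β k)
    (hratio : Tendsto (fun k => β k / α k) atTop (nhds c))
    (hdiv : Tendsto (fun N => ∑ k ∈ Finset.Icc 1 N, (α k) ^ (2 - 2*H)) atTop atTop) :
    ∀ ΛL > (0:ℝ),
      Tendsto (fun N =>
          (∑ k ∈ Finset.Icc 1 N, (α k) ^ 2 / (α k * ΛL + β k) ^ (2*H)) /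
          (∑ k ∈ Finset.Icc 1 N, (α k) ^ 2 / (α k * lam + β k) ^ (2*H)))
        atTop (nhds (((lam + c) / (ΛL + c)) ^ (2*H))) := by
  intro ΛL hΛL
  have hnum := aux_ratio H hH c α β hα hβ hratio hdiv hc hΛL
  have hden := aux_ratio H hH c α β hα hβ hratio hdiv hc hlam
  have hden0 : (lam + c) ^ (-(2*H)) ≠ 0 := by
    have : (0:ℝ) < lam + c := by linarith
    exact (Real.rpow_pos_of_pos this _).ne'
  have hlim := hnum.div hden hden0
  have hval : (ΛL + c) ^ (-(2*H)) / (lam + c) ^ (-(2*H)) = ((lam + c) / (ΛL + c)) ^ (2*H) := by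
    have h1 : (0:ℝ) < ΛL + c := by linarith
    have h2 : (0:ℝ) < lam + c := by linarith
    rw [Real.div_rpow h2.le h1.le, Real.rpow_neg h1.le, Real.rpow_neg h2.le]
    rw [div_eq_div_iff (by positivity) (by positivity)]
    field_simp
  rw [hval] at hlim
  refine hlim.congr' ?_
  filter_upwards [hdiv.eventually_gt_atTop 0] with N hN
  have hS : (∑ k ∈ Finset.Icc 1 N, (α k) ^ (2 - 2*H)) ≠ 0 := hN.ne'
  simp only [Pi.div_apply]
  rw [div_div_div_cancel_right₀ hS]
end
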